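/- Let G be a connected graph on n vertices with toughness τ(G) < 1. Then n + (1-τ(G))/τ(G) ≤ max{n + c(S) - |S| : S ⊆ [n], c(S) ≥ 2 or S = ∅} ≤ n + (n-1)(1-τ(G)). -/
import Mathlib

open SimpleGraph MvPolynomial

/-- Number of connected components of the graph obtained from `G` by deleting
the vertices in `S` (the induced subgraph on the complement of `S`). -/
noncomputable def numComp {V : Type*} (G : SimpleGraph V) (S : Finset V) : ℕ :=
  Nat.card ((G.induce ((↑S : Set V)ᶜ)).ConnectedComponent)

/-- `G` is `ℓ`-vertex-connected: `ℓ < |V|` and deleting fewer than `ℓ` vertices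
leaves the graph connected. -/
def lVertexConnected {V : Type*} [Fintype V] (G : SimpleGraph V) (ℓ : ℕ) : Prop :=
  ℓ < Fintype.card V ∧
    ∀ S : Finset V, S.card < ℓ → (G.induce ((↑S : Set V)ᶜ)).Connected

lemma numComp_empty {V : Type*} (G : SimpleGraph V) (hconn : G.Connected) :
    numComp G (∅ : Finset V) = 1 := by
  unfold numComp
  have h : (G.induce ((↑(∅ : Finset V) : Set V)ᶜ)).Connected := by
    have : ((↑(∅ : Finset V) : Set V)ᶜ) = Set.univ := by simp
    rw [this]
    exact ((induceUnivIso G).connected_iff).mpr hconn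
  haveI : Subsingleton ((G.induce ((↑(∅ : Finset V) : Set V)ᶜ)).ConnectedComponent) := by
    constructor
    intro a b
    refine SimpleGraph.ConnectedComponent.ind₂ (fun v w => ?_) a b
    exact SimpleGraph.ConnectedComponent.eq.mpr (h.preconnected v w)
  haveI : Nonempty ((G.induce ((↑(∅ : Finset V) : Set V)ᶜ)).ConnectedComponent) :=
    ⟨SimpleGraph.connectedComponentMk _ (Classical.choice h.nonempty)⟩
  exact Nat.card_eq_one_iff_unique.mpr ⟨inferInstance, inferInstance⟩

lemma numComp_add_card_le {V : Type*} [Fintype V] (G : SimpleGraph V) (S : Finset V) :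
    numComp G S + S.card ≤ Fintype.card V := by
  classical
  have h1 : numComp G S ≤ Nat.card ((↑S : Set V)ᶜ : Set V) := by
    haveI : Finite ((↑S : Set V)ᶜ : Set V) := Set.toFinite _
    exact Nat.card_le_card_of_surjective
      (SimpleGraph.connectedComponentMk _) (SimpleGraph.ConnectedComponent.ind (fun v => ⟨v, rfl⟩))
  have h2 : Nat.card ((↑S : Set V)ᶜ : Set V) = Fintype.card V - S.card := by
    rw [← Finset.coe_compl, Nat.card_coe_set_eq, Set.ncard_coe_finset, Finset.card_compl]
  rw [h2] at h1
  have := S.card_le_univ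
  rw [← Finset.card_fin (Fintype.card V)] at *
  omega

lemma nonempty_of_two_le_numComp {V : Type*} (G : SimpleGraph V) (hconn : G.Connected)
    {S : Finset V} (h : 2 ≤ numComp G S) : 1 ≤ S.card := by
  rcases Nat.eq_zero_or_pos S.card with h0 | h0
  · rw [Finset.card_eq_zero] at h0
    subst h0
    rw [numComp_empty G hconn] at h
    omega
  · exact h0

theorem dim_bounds_of_toughness {n : ℕ} (G : SimpleGraph (Fin n))
    (hconn : G.Connected) (τ : ℚ)
    (hτ : IsLeast {q : ℚ | ∃ S : Finset (Fin n), 2 ≤ numComp G S ∧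
      q = (S.card : ℚ) / (numComp G S : ℚ)} τ)
    (hlt : τ < 1) (M : ℚ)
    (hM : IsGreatest {d : ℚ | ∃ S : Finset (Fin n),
      (2 ≤ numComp G S ∨ S = ∅) ∧
      d = (n : ℚ) + (numComp G S : ℚ) - (S.card : ℚ)} M) :
    (n : ℚ) + (1 - τ) / τ ≤ M ∧ M ≤ (n : ℚ) + ((n : ℚ) - 1) * (1 - τ) := by
  obtain ⟨⟨S₀, hc₀, hτeq⟩, hlb⟩ := hτ
  obtain ⟨⟨S₁, hS₁, hMeq⟩, hub⟩ := hM
  set a : ℚ := (S₀.card : ℚ) with ha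
  set c : ℚ := (numComp G S₀ : ℚ) with hc
  have ha1 : (1 : ℚ) ≤ a := by rw [ha]; exact_mod_cast nonempty_of_two_le_numComp G hconn hc₀
  have hc2 : (2 : ℚ) ≤ c := by rw [hc]; exact_mod_cast hc₀
  have hacn : a + c ≤ (n : ℚ) := by
    have := numComp_add_card_le G S₀
    rw [Fintype.card_fin] at this
    rw [ha, hc]
    exact_mod_cast (show S₀.card + numComp G S₀ ≤ n by omega)
  have hcpos : (0 : ℚ) < c := by linarith
  have hτpos : (0 : ℚ) < τ := by
    rw [hτeq]; positivity
  have hτc : τ * c = a := by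
    rw [hτeq]; field_simp
  have hac : a < c := by
    nlinarith [hlt, hτc]
  constructor
  · -- lower bound
    have hmem : (n : ℚ) + c - a ≤ M := hub ⟨S₀, Or.inl hc₀, rfl⟩
    have key : (1 - τ) / τ ≤ c - a := by
      rw [div_le_iff₀ hτpos]
      nlinarith [mul_nonneg (sub_nonneg.mpr ha1) (sub_nonneg.mpr hlt.le)]
    linarith
  · -- upper bound
    rcases hS₁ with hc₁ | hemp
    · set b : ℚ := (S₁.card : ℚ) with hb
      set d : ℚ := (numComp G S₁ : ℚ) with hd
      have hb1 : (1 : ℚ) ≤ b := by rw [hb]; exact_mod_cast nonempty_of_two_le_numComp G hconn hc₁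
      have hd2 : (2 : ℚ) ≤ d := by rw [hd]; exact_mod_cast hc₁
      have hbdn : b + d ≤ (n : ℚ) := by
        have := numComp_add_card_le G S₁
        rw [Fintype.card_fin] at this
        rw [hb, hd]
        exact_mod_cast (show S₁.card + numComp G S₁ ≤ n by omega)
      have hτle : τ ≤ b / d := hlb ⟨S₁, hc₁, rfl⟩
      have hτd : τ * d ≤ b := by
        rw [← le_div_iff₀ (by linarith : (0:ℚ) < d)]
        exact hτle
      rw [hMeq]
      have : d - b ≤ ((n : ℚ) - 1) * (1 - τ) := by
        nlinarith [mul_nonneg (sub_nonneg.mpr hb1) (sub_nonneg.mpr hlt.le)]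
      linarith
    · subst hemp
      rw [hMeq, numComp_empty G hconn]
      have h1 : (1 : ℚ) ≤ c - a := by
        have : S₀.card + 1 ≤ numComp G S₀ := by
          have : (S₀.card : ℚ) < numComp G S₀ := hac
          exact_mod_cast this
        have : (S₀.card : ℚ) + 1 ≤ (numComp G S₀ : ℚ) := by exact_mod_cast this
        linarith
      have hn1 : c ≤ (n : ℚ) - 1 := by linarith
      have : (1 : ℚ) ≤ ((n : ℚ) - 1) * (1 - τ) := by
        nlinarith [hτc]
      push_cast
      linarith
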